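/- Let H be the graph on all labeled n-vertex graphs with exactly M edges where adjacency is given by swapping an edge with a non-edge, equipped with the uniform lazy random walk m_G(G') = 1/(M(C(n,2)-M)+1) on closed neighborhoods. Then for every pair of adjacent G₁, G₂ in H, the Ricci curvature satisfies κ(G₁, G₂) ≥ C(n,2)/(M(C(n,2)-M)+1). -/

import Mathlib

open Finset

/-- A probability vector on a finite set. -/
def IsProbVec {V : Type*} [Fintype V] (m : V → ℝ) : Prop :=
  (∀ x, 0 ≤ m x) ∧ ∑ x, m x = 1

/-- A coupling between two probability vectors. -/
def IsCoupling {V : Type*} [Fintype V] (m₁ m₂ : V → ℝ) (A : V → V → ℝ) : Prop :=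
  (∀ x y, 0 ≤ A x y) ∧ (∀ x, ∑ y, A x y = m₁ x) ∧ (∀ y, ∑ x, A x y = m₂ y)

/-- The L¹-Wasserstein (transportation) distance between two probability vectors,
with respect to the graph metric. -/
noncomputable def Wdist {V : Type*} [Fintype V] (G : SimpleGraph V) (m₁ m₂ : V → ℝ) : ℝ :=
  sInf {s | ∃ A : V → V → ℝ, IsCoupling m₁ m₂ A ∧
    s = ∑ x, ∑ y, A x y * (G.dist x y : ℝ)}

/-- A random walk on a graph: at each vertex a probability measure supported on
the closed neighborhood. -/
def IsRandomWalk {V : Type*} [Fintype V] (G : SimpleGraph V) (m : V → V → ℝ) : Prop :=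
  ∀ x, IsProbVec (m x) ∧ ∀ y, m x y ≠ 0 → y = x ∨ G.Adj x y

/-- Ollivier's Ricci curvature `κ(x,y) = 1 - W(m_x, m_y)/d(x,y)`. -/
noncomputable def ricci {V : Type*} [Fintype V] (G : SimpleGraph V) (m : V → V → ℝ)
    (x y : V) : ℝ :=
  1 - Wdist G (m x) (m y) / (G.dist x y : ℝ)

/-- The averaging operator `(Mf)(x) = ∑_y f(y)·m_x(y)`. -/
def Mop {V : Type*} [Fintype V] (m : V → V → ℝ) (f : V → ℝ) : V → ℝ :=
  fun x => ∑ y, f y * m x y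
/-- Labeled graphs on `n` vertices with exactly `M` edges, encoded as `M`-element sets
of non-diagonal unordered vertex pairs. -/
def GraphM (n M : ℕ) :=
  {E : Finset (Sym2 (Fin n)) // (∀ e ∈ E, ¬ e.IsDiag) ∧ E.card = M}

instance (n M : ℕ) : Fintype (GraphM n M) := by unfold GraphM; infer_instance
instance (n M : ℕ) : DecidableEq (GraphM n M) := by unfold GraphM; infer_instance

/-- The exchange graph `H` on `GraphM n M`: two graphs are adjacent iff one is obtained
from the other by swapping an edge with a non-edge. -/
def exchangeGraph (n M : ℕ) : SimpleGraph (GraphM n M) where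
  Adj G₁ G₂ := (G₁.val \ G₂.val).card = 1 ∧ (G₂.val \ G₁.val).card = 1
  symm := ⟨fun _ _ h => ⟨h.2, h.1⟩⟩
  loopless := ⟨fun G h => by simp at h⟩

instance (n M : ℕ) : DecidableRel (exchangeGraph n M).Adj := fun _ _ => instDecidableAnd

/-- The lazy uniform random walk on `exchangeGraph n M`, uniform on closed
neighborhoods with mass `1/(M(C(n,2)-M)+1)`. -/
noncomputable def exchangeWalk (n M : ℕ) : GraphM n M → GraphM n M → ℝ :=
  fun G G' =>
    if G = G' ∨ (exchangeGraph n M).Adj G G' then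
      1 / ((M * (n.choose 2 - M) : ℕ) + 1 : ℝ)
    else 0

variable {α : Type*} [DecidableEq α]

lemma symmDiff_pair_eq (S : Finset α) {e₁ e₂ : α} (h1 : e₁ ∈ S) (h2 : e₂ ∉ S) :
    symmDiff S ({e₁, e₂} : Finset α) = insert e₂ (S.erase e₁) := by
  have hne : e₁ ≠ e₂ := fun h => h2 (h ▸ h1)
  ext x
  simp only [Finset.mem_symmDiff, Finset.mem_insert, Finset.mem_singleton, Finset.mem_erase]
  by_cases hx1 : x = e₁ <;> by_cases hx2 : x = e₂ <;> subst_vars <;> simp_all <;> tauto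

lemma card_symmDiff_pair (S : Finset α) {e₁ e₂ : α} (h1 : e₁ ∈ S) (h2 : e₂ ∉ S) :
    (symmDiff S ({e₁, e₂} : Finset α)).card = S.card := by
  rw [symmDiff_pair_eq S h1 h2,
    Finset.card_insert_of_notMem (fun h => h2 (Finset.mem_of_mem_erase h)),
    Finset.card_erase_add_one h1]

lemma symmDiff_symmDiff_right_cancel (a b c : Finset α) : symmDiff (symmDiff a c) (symmDiff b c) = symmDiff a b := by
  ext x; simp only [Finset.mem_symmDiff]; tauto

lemma symmDiff_right_comm' (a b c : Finset α) : symmDiff (symmDiff a b) c = symmDiff (symmDiff a c) b := by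
  ext x; simp only [Finset.mem_symmDiff]; tauto

lemma sdiff_card_eq {s t : Finset α} (h : s.card = t.card) : (s \ t).card = (t \ s).card := by
  have h1 := Finset.card_sdiff_add_card_inter s t
  have h2 := Finset.card_sdiff_add_card_inter t s
  rw [Finset.inter_comm] at h2; omega

lemma card_symmDiff' (s t : Finset α) : (symmDiff s t).card = (s \ t).card + (t \ s).card := by
  rw [symmDiff_def]
  exact Finset.card_union_of_disjoint disjoint_sdiff_sdiff

lemma sdiff_singleton_eq' {s t : Finset α} {a b : α} (h1 : s \ t = {a}) (h2 : t \ s = {b}) :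
    t = insert b (s.erase a) := by
  ext x
  have u1 : x ∈ s ∧ x ∉ t ↔ x = a := by rw [← Finset.mem_sdiff, h1, Finset.mem_singleton]
  have u2 : x ∈ t ∧ x ∉ s ↔ x = b := by rw [← Finset.mem_sdiff, h2, Finset.mem_singleton]
  simp only [Finset.mem_insert, Finset.mem_erase]
  constructor
  · intro hx
    by_cases hxs : x ∈ s
    · exact Or.inr ⟨fun he => (u1.mpr he).2 hx, hxs⟩
    · exact Or.inl (u2.mp ⟨hx, hxs⟩)
  · rintro (hxb | ⟨hxa, hxs⟩)
    · have : b ∈ t \ s := h2 ▸ Finset.mem_singleton_self b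
      exact hxb ▸ (Finset.mem_sdiff.mp this).1
    · by_contra hxt
      exact hxa (u1.mp ⟨hxs, hxt⟩)

lemma count_aux (B M C : ℕ) (hM : 1 ≤ M) (hC : M + 1 ≤ C) (hB : B ≤ (M-1)*(C-(M+1))) :
    B + C ≤ M*(C-M)+1 := by
  obtain ⟨s, rfl⟩ : ∃ s, M = s+1 := ⟨M-1, by omega⟩
  obtain ⟨u, rfl⟩ : ∃ u, C = s+1+1+u := ⟨C-(s+2), by omega⟩
  have g2 : s+1+1+u - (s+1+1) = u := by omega
  have g3 : s+1-1 = s := by omega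
  have g1 : s+1+1+u - (s+1) = u+1 := by omega
  rw [g2, g3] at hB
  rw [g1]
  have g4 : (s+1)*(u+1) = s*u + s + u + 1 := by ring
  rw [g4]
  linarith
section Psi
variable {n M : ℕ}

lemma mem_closed_iff (G X : GraphM n M) :
    (G = X ∨ (exchangeGraph n M).Adj G X) ↔ (symmDiff G.val X.val).card ≤ 2 := by
  have hc : G.val.card = X.val.card := by rw [G.2.2, X.2.2]
  have hd := sdiff_card_eq hc
  rw [card_symmDiff']
  constructor
  · rintro (rfl | ⟨h1, h2⟩)
    · simp
    · omega
  · intro h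
    rcases Nat.lt_or_ge (G.val \ X.val).card 1 with h0 | h1
    · left
      have hsub : G.val ⊆ X.val := by
        rw [← Finset.sdiff_eq_empty_iff_subset, ← Finset.card_eq_zero]; omega
      exact Subtype.ext (Finset.eq_of_subset_of_card_le hsub (le_of_eq hc.symm))
    · right; exact ⟨by omega, by omega⟩

def psi (e₁ e₂ : Sym2 (Fin n)) (h₁ : ¬e₁.IsDiag) (h₂ : ¬e₂.IsDiag) (X : GraphM n M) :
    GraphM n M :=
  if h : e₁ ∈ X.val ↔ e₂ ∈ X.val then X
  else ⟨symmDiff X.val {e₁, e₂}, by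
    constructor
    · intro e he
      rw [Finset.mem_symmDiff] at he
      rcases he with ⟨he, _⟩ | ⟨he, _⟩
      · exact X.2.1 e he
      · rcases Finset.mem_insert.mp he with rfl | he
        · exact h₁
        · rw [Finset.mem_singleton] at he; subst he; exact h₂
    · by_cases hm : e₁ ∈ X.val
      · by_cases hm2 : e₂ ∈ X.val
        · exact absurd (iff_of_true hm hm2) h
        · rw [card_symmDiff_pair X.val hm hm2]; exact X.2.2
      · by_cases hm2 : e₂ ∈ X.val
        · rw [Finset.pair_comm, card_symmDiff_pair X.val hm2 hm]; exact X.2.2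
        · exact absurd (iff_of_false hm hm2) h⟩

variable {e₁ e₂ : Sym2 (Fin n)} {h₁ : ¬e₁.IsDiag} {h₂ : ¬e₂.IsDiag}

lemma psi_apply_of_iff {X : GraphM n M} (h : e₁ ∈ X.val ↔ e₂ ∈ X.val) :
    psi e₁ e₂ h₁ h₂ X = X := dif_pos h

lemma psi_val_of_not {X : GraphM n M} (h : ¬(e₁ ∈ X.val ↔ e₂ ∈ X.val)) :
    (psi e₁ e₂ h₁ h₂ X).val = symmDiff X.val {e₁, e₂} := by
  exact congrArg Subtype.val (dif_neg h : psi e₁ e₂ h₁ h₂ X = _)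

lemma psi_comm (X : GraphM n M) : psi e₂ e₁ h₂ h₁ X = psi e₁ e₂ h₁ h₂ X := by
  by_cases h : e₁ ∈ X.val ↔ e₂ ∈ X.val
  · rw [psi_apply_of_iff h, psi_apply_of_iff h.symm]
  · apply Subtype.ext
    rw [psi_val_of_not h, psi_val_of_not (fun hh => h hh.symm), Finset.pair_comm]

lemma mem_psi_val_left {X : GraphM n M} (h : ¬(e₁ ∈ X.val ↔ e₂ ∈ X.val)) :
    e₁ ∈ (psi e₁ e₂ h₁ h₂ X).val ↔ e₁ ∉ X.val := by
  rw [psi_val_of_not h, Finset.mem_symmDiff]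
  simp only [Finset.mem_insert, Finset.mem_singleton]
  tauto

lemma mem_psi_val_right {X : GraphM n M} (h : ¬(e₁ ∈ X.val ↔ e₂ ∈ X.val)) :
    e₂ ∈ (psi e₁ e₂ h₁ h₂ X).val ↔ e₂ ∉ X.val := by
  rw [psi_val_of_not h, Finset.mem_symmDiff]
  simp only [Finset.mem_insert, Finset.mem_singleton]
  tauto

lemma psi_psi (X : GraphM n M) : psi e₁ e₂ h₁ h₂ (psi e₁ e₂ h₁ h₂ X) = X := by
  by_cases h : e₁ ∈ X.val ↔ e₂ ∈ X.val
  · rw [psi_apply_of_iff h, psi_apply_of_iff h]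
  · have h' : ¬(e₁ ∈ (psi e₁ e₂ h₁ h₂ X).val ↔ e₂ ∈ (psi e₁ e₂ h₁ h₂ X).val) := by
      rw [mem_psi_val_left h, mem_psi_val_right h]
      tauto
    apply Subtype.ext
    rw [psi_val_of_not h', psi_val_of_not h, symmDiff_symmDiff_cancel_right]

lemma psi_mem_closed (G₁ G₂ : GraphM n M)
    (he₁ : e₁ ∈ G₁.val) (he₂ : e₂ ∉ G₁.val)
    (hG₂ : G₂.val = symmDiff G₁.val {e₁, e₂}) (X : GraphM n M)
    (hX : (symmDiff G₁.val X.val).card ≤ 2) :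
    (symmDiff G₂.val (psi e₁ e₂ h₁ h₂ X).val).card ≤ 2 := by
  by_cases h : e₁ ∈ X.val ↔ e₂ ∈ X.val
  · rw [psi_apply_of_iff h, hG₂, symmDiff_right_comm']
    by_cases hm : e₁ ∈ X.val
    · have hm2 : e₂ ∈ X.val := h.mp hm
      have a1 : e₁ ∉ symmDiff G₁.val X.val := by
        rw [Finset.mem_symmDiff]; tauto
      have a2 : e₂ ∈ symmDiff G₁.val X.val := by
        rw [Finset.mem_symmDiff]; tauto
      rw [Finset.pair_comm, card_symmDiff_pair _ a2 a1]
      exact hX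
    · have hm2 : e₂ ∉ X.val := fun hh => hm (h.mpr hh)
      have a1 : e₁ ∈ symmDiff G₁.val X.val := by
        rw [Finset.mem_symmDiff]; tauto
      have a2 : e₂ ∉ symmDiff G₁.val X.val := by
        rw [Finset.mem_symmDiff]; tauto
      rw [card_symmDiff_pair _ a1 a2]
      exact hX
  · rw [psi_val_of_not h, hG₂, symmDiff_symmDiff_right_cancel]
    exact hX

end Psi

set_option maxHeartbeats 1000000 in
/-- For the lazy uniform random walk on the exchange graph of
`n`-vertex graphs with `M` edges, every pair of adjacent graphs has Ricci curvature
at least `C(n,2)/(M(C(n,2)-M)+1)`. -/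
theorem exchangeGraph_ricci_ge (n M : ℕ) :
    ∀ G₁ G₂ : GraphM n M, (exchangeGraph n M).Adj G₁ G₂ →
      (n.choose 2 : ℝ) / ((M * (n.choose 2 - M) : ℕ) + 1 : ℝ) ≤
        ricci (exchangeGraph n M) (exchangeWalk n M) G₁ G₂ := by
  intro G₁ G₂ hadj
  classical
  have hc1 : (G₁.val \ G₂.val).card = 1 := hadj.1
  have hc2 : (G₂.val \ G₁.val).card = 1 := hadj.2
  obtain ⟨e₁, he1⟩ := Finset.card_eq_one.mp hc1
  obtain ⟨e₂, he2⟩ := Finset.card_eq_one.mp hc2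
  have he₁m : e₁ ∈ G₁.val \ G₂.val := he1 ▸ Finset.mem_singleton_self e₁
  have he₂m : e₂ ∈ G₂.val \ G₁.val := he2 ▸ Finset.mem_singleton_self e₂
  have he₁G₁ : e₁ ∈ G₁.val := (Finset.mem_sdiff.mp he₁m).1
  have he₁G₂ : e₁ ∉ G₂.val := (Finset.mem_sdiff.mp he₁m).2
  have he₂G₂ : e₂ ∈ G₂.val := (Finset.mem_sdiff.mp he₂m).1
  have he₂G₁ : e₂ ∉ G₁.val := (Finset.mem_sdiff.mp he₂m).2
  have hne : e₁ ≠ e₂ := fun h => he₂G₁ (h ▸ he₁G₁)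
  have h₁d : ¬e₁.IsDiag := G₁.2.1 e₁ he₁G₁
  have h₂d : ¬e₂.IsDiag := G₂.2.1 e₂ he₂G₂
  have hG₂ins : G₂.val = insert e₂ (G₁.val.erase e₁) := sdiff_singleton_eq' he1 he2
  have hG₂val : G₂.val = symmDiff G₁.val {e₁, e₂} :=
    hG₂ins.trans (symmDiff_pair_eq G₁.val he₁G₁ he₂G₁).symm
  have hG₁val : G₁.val = symmDiff G₂.val {e₂, e₁} := by
    rw [hG₂val, Finset.pair_comm e₂ e₁]
    exact (symmDiff_symmDiff_cancel_right _ _).symm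
  have hpsiG₁ : psi e₁ e₂ h₁d h₂d G₁ = G₂ := by
    apply Subtype.ext
    rw [psi_val_of_not (by simp [he₁G₁, he₂G₁]), hG₂val]
  have hpsiG₂ : psi e₁ e₂ h₁d h₂d G₂ = G₁ := by rw [← hpsiG₁, psi_psi]
  have hmem : ∀ X : GraphM n M,
      (G₁ = X ∨ (exchangeGraph n M).Adj G₁ X) ↔
      (G₂ = psi e₁ e₂ h₁d h₂d X ∨ (exchangeGraph n M).Adj G₂ (psi e₁ e₂ h₁d h₂d X)) := by
    intro X
    rw [mem_closed_iff, mem_closed_iff]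
    constructor
    · exact fun h => psi_mem_closed G₁ G₂ he₁G₁ he₂G₁ hG₂val X h
    · intro h
      have h' := psi_mem_closed (e₁ := e₂) (e₂ := e₁) (h₁ := h₂d) (h₂ := h₁d)
        G₂ G₁ he₂G₂ he₁G₂ hG₁val _ h
      rw [psi_comm, psi_psi] at h'
      exact h'
  set K : ℝ := ((M * (n.choose 2 - M) : ℕ) + 1 : ℝ) with hKdef
  have hKpos : (0:ℝ) < K := by rw [hKdef]; positivity
  have hwalk : ∀ X, exchangeWalk n M G₁ X = exchangeWalk n M G₂ (psi e₁ e₂ h₁d h₂d X) := by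
    intro X
    unfold exchangeWalk
    exact if_congr (hmem X) rfl rfl
  have hinv : Function.Involutive (psi (M := M) e₁ e₂ h₁d h₂d) := fun X => psi_psi X
  set φ : Equiv.Perm (GraphM n M) :=
    (Function.Involutive.toPerm _ hinv).trans (Equiv.swap G₁ G₂) with hφdef
  have hφ : ∀ X, φ X = Equiv.swap G₁ G₂ (psi e₁ e₂ h₁d h₂d X) := fun X => rfl
  have hφG₁ : φ G₁ = G₁ := by rw [hφ, hpsiG₁, Equiv.swap_apply_right]
  have hφG₂ : φ G₂ = G₂ := by rw [hφ, hpsiG₂, Equiv.swap_apply_left]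
  have hφψ : ∀ X, X ≠ G₁ → X ≠ G₂ → φ X = psi e₁ e₂ h₁d h₂d X := by
    intro X hX1 hX2
    rw [hφ]
    apply Equiv.swap_apply_of_ne_of_ne
    · intro h
      have h2 := psi_psi (h₁ := h₁d) (h₂ := h₂d) X
      rw [h, hpsiG₁] at h2
      exact hX2 h2.symm
    · intro h
      have h2 := psi_psi (h₁ := h₁d) (h₂ := h₂d) X
      rw [h, hpsiG₂] at h2
      exact hX1 h2.symm
  have hwalk2 : ∀ X, exchangeWalk n M G₂ (φ X) = exchangeWalk n M G₂ (psi e₁ e₂ h₁d h₂d X) := by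
    intro X
    by_cases hX1 : X = G₁
    · subst hX1
      rw [hφG₁, hpsiG₁]
      unfold exchangeWalk
      rw [if_pos (Or.inr hadj.symm), if_pos (Or.inl rfl)]
    · by_cases hX2 : X = G₂
      · subst hX2
        rw [hφG₂, hpsiG₂]
        unfold exchangeWalk
        rw [if_pos (Or.inl rfl), if_pos (Or.inr hadj.symm)]
      · rw [hφψ X hX1 hX2]
  have hwalkφ : ∀ X, exchangeWalk n M G₁ X = exchangeWalk n M G₂ (φ X) :=
    fun X => (hwalk X).trans (hwalk2 X).symm
  -- the coupling
  set A : GraphM n M → GraphM n M → ℝ :=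
    fun X Y => if Y = φ X then exchangeWalk n M G₁ X else 0 with hA
  have hwnn : ∀ X Y : GraphM n M, 0 ≤ exchangeWalk n M X Y := by
    intro X Y
    unfold exchangeWalk
    split
    · positivity
    · exact le_refl 0
  have hAnn : ∀ X Y, 0 ≤ A X Y := by
    intro X Y
    rw [hA]
    dsimp only
    split
    · exact hwnn G₁ X
    · exact le_refl 0
  have hrow : ∀ X, ∑ Y, A X Y = exchangeWalk n M G₁ X := by
    intro X
    rw [hA]
    dsimp only
    rw [Finset.sum_ite_eq' Finset.univ (φ X) (fun _ => exchangeWalk n M G₁ X)]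
    exact if_pos (Finset.mem_univ _)
  have hcol : ∀ Y, ∑ X, A X Y = exchangeWalk n M G₂ Y := by
    intro Y
    have hcond : ∀ X, (Y = φ X) ↔ (X = φ.symm Y) := by
      intro X
      rw [Equiv.eq_symm_apply]
      exact eq_comm
    rw [hA]
    dsimp only
    calc (∑ X, if Y = φ X then exchangeWalk n M G₁ X else 0)
        = ∑ X, if X = φ.symm Y then exchangeWalk n M G₁ X else 0 := by
          apply Finset.sum_congr rfl
          intro X _
          exact if_congr (hcond X) rfl rfl
      _ = exchangeWalk n M G₁ (φ.symm Y) := by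
          rw [Finset.sum_ite_eq' Finset.univ (φ.symm Y) (fun X => exchangeWalk n M G₁ X)]
          exact if_pos (Finset.mem_univ _)
      _ = exchangeWalk n M G₂ Y := by rw [hwalkφ, Equiv.apply_symm_apply]
  have hAdjφ : ∀ X : GraphM n M, φ X = X ∨ (exchangeGraph n M).Adj X (φ X) := by
    intro X
    by_cases hX1 : X = G₁
    · left; rw [hX1, hφG₁]
    by_cases hX2 : X = G₂
    · left; rw [hX2, hφG₂]
    rw [hφψ X hX1 hX2]
    by_cases h : e₁ ∈ X.val ↔ e₂ ∈ X.val
    · left; rw [psi_apply_of_iff h]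
    · have hcard : (symmDiff X.val (psi e₁ e₂ h₁d h₂d X).val).card ≤ 2 := by
        rw [psi_val_of_not h, symmDiff_symmDiff_cancel_left,
          Finset.card_insert_of_notMem (by simp [hne]), Finset.card_singleton]
      rcases (mem_closed_iff X (psi e₁ e₂ h₁d h₂d X)).mpr hcard with heq | hA'
      · left; exact heq.symm
      · right; exact hA'
  -- the bad set
  set bad : Finset (GraphM n M) := Finset.univ.filter
    (fun X => (G₁ = X ∨ (exchangeGraph n M).Adj G₁ X) ∧ φ X ≠ X) with hbad
  have hterm : ∀ X, exchangeWalk n M G₁ X * ((exchangeGraph n M).dist X (φ X) : ℝ)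
      ≤ if X ∈ bad then 1 / K else 0 := by
    intro X
    by_cases hXnb : G₁ = X ∨ (exchangeGraph n M).Adj G₁ X
    · by_cases hφX : φ X = X
      · rw [hφX, SimpleGraph.dist_self]
        rw [Nat.cast_zero, mul_zero]
        split
        · positivity
        · exact le_refl 0
      · have hXin : X ∈ bad := by
          rw [hbad, Finset.mem_filter]
          exact ⟨Finset.mem_univ _, hXnb, hφX⟩
        rw [if_pos hXin]
        have hd : ((exchangeGraph n M).dist X (φ X) : ℝ) ≤ 1 := by
          rcases hAdjφ X with h | h
          · rw [h, SimpleGraph.dist_self]; norm_num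
          · rw [SimpleGraph.dist_eq_one_iff_adj.mpr h]; norm_num
        have hw : exchangeWalk n M G₁ X = 1 / K := by
          unfold exchangeWalk
          rw [if_pos hXnb]
        rw [hw]
        calc 1/K * ((exchangeGraph n M).dist X (φ X) : ℝ) ≤ 1/K * 1 :=
              mul_le_mul_of_nonneg_left hd (by positivity)
          _ = 1/K := mul_one _
    · have hw : exchangeWalk n M G₁ X = 0 := by
        unfold exchangeWalk
        rw [if_neg hXnb]
      rw [hw, zero_mul]
      split
      · positivity
      · exact le_refl 0
  -- counting facts
  have hMpos : 1 ≤ M := by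
    have h := Finset.card_pos.mpr ⟨e₁, he₁G₁⟩
    rw [G₁.2.2] at h
    exact h
  set ND : Finset (Sym2 (Fin n)) := Finset.univ.filter (fun e => ¬ e.IsDiag) with hND
  have hNDcard : ND.card = n.choose 2 := by
    rw [hND, ← Fintype.card_subtype, Sym2.card_subtype_not_diag, Fintype.card_fin]
  have hsubND : insert e₂ G₁.val ⊆ ND := by
    intro x hx
    rw [hND, Finset.mem_filter]
    refine ⟨Finset.mem_univ _, ?_⟩
    rcases Finset.mem_insert.mp hx with rfl | hx
    · exact h₂d
    · exact G₁.2.1 x hx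
  have hMC : M + 1 ≤ n.choose 2 := by
    have h := Finset.card_le_card hsubND
    rw [Finset.card_insert_of_notMem he₂G₁, G₁.2.2, hNDcard] at h
    omega
  -- the injection bounding bad.card
  have hbadcard : bad.card ≤ (M - 1) * (n.choose 2 - (M + 1)) := by
    set f : GraphM n M → Sym2 (Fin n) × Sym2 (Fin n) := fun X =>
      (if h : ∃ a, G₁.val \ X.val = {a} then h.choose else e₁,
       if h : ∃ b, X.val \ G₁.val = {b} then h.choose else e₁) with hf
    have hfact : ∀ X ∈ bad, (G₁.val \ X.val = {(f X).1}) ∧ (X.val \ G₁.val = {(f X).2})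
        ∧ e₁ ∈ X.val ∧ e₂ ∉ X.val := by
      intro X hX
      rw [hbad, Finset.mem_filter] at hX
      obtain ⟨-, hXnb, hφX⟩ := hX
      have hX1 : X ≠ G₁ := fun h => hφX (h ▸ hφG₁)
      have hX2 : X ≠ G₂ := fun h => hφX (h ▸ hφG₂)
      have hAdjX : (exchangeGraph n M).Adj G₁ X := by
        rcases hXnb with h | h
        · exact absurd h.symm hX1
        · exact h
      have hex1 : ∃ a, G₁.val \ X.val = {a} := Finset.card_eq_one.mp hAdjX.1
      have hex2 : ∃ b, X.val \ G₁.val = {b} := Finset.card_eq_one.mp hAdjX.2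
      have hf1 : G₁.val \ X.val = {(f X).1} := by
        rw [hf]
        dsimp only
        rw [dif_pos hex1]
        exact hex1.choose_spec
      have hf2 : X.val \ G₁.val = {(f X).2} := by
        rw [hf]
        dsimp only
        rw [dif_pos hex2]
        exact hex2.choose_spec
      have hnotiff : ¬(e₁ ∈ X.val ↔ e₂ ∈ X.val) := by
        intro h
        exact hφX (by rw [hφψ X hX1 hX2, psi_apply_of_iff h])
      have hkey : e₁ ∈ X.val ∧ e₂ ∉ X.val := by
        by_cases hm : e₁ ∈ X.val
        · exact ⟨hm, fun hm2 => hnotiff (iff_of_true hm hm2)⟩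
        · exfalso
          have hm2 : e₂ ∈ X.val := by tauto
          have hee1 : G₁.val \ X.val = {e₁} := by
            have hmm : e₁ ∈ G₁.val \ X.val := Finset.mem_sdiff.mpr ⟨he₁G₁, hm⟩
            rw [hf1] at hmm ⊢
            rw [Finset.mem_singleton] at hmm
            rw [hmm]
          have hee2 : X.val \ G₁.val = {e₂} := by
            have hmm : e₂ ∈ X.val \ G₁.val := Finset.mem_sdiff.mpr ⟨hm2, he₂G₁⟩
            rw [hf2] at hmm ⊢
            rw [Finset.mem_singleton] at hmm
            rw [hmm]
          exact hX2 (Subtype.ext ((sdiff_singleton_eq' hee1 hee2).trans hG₂ins.symm))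
      exact ⟨hf1, hf2, hkey.1, hkey.2⟩
    have hle : bad.card ≤ ((G₁.val.erase e₁) ×ˢ (ND \ insert e₂ G₁.val)).card := by
      apply Finset.card_le_card_of_injOn f
      · intro X hX
        obtain ⟨hf1, hf2, he₁X, he₂X⟩ := hfact X hX
        have ha : (f X).1 ∈ G₁.val \ X.val := hf1 ▸ Finset.mem_singleton_self _
        have hb : (f X).2 ∈ X.val \ G₁.val := hf2 ▸ Finset.mem_singleton_self _
        rw [Finset.mem_sdiff] at ha hb
        rw [Finset.mem_coe, Finset.mem_product]
        constructor
        · rw [Finset.mem_erase]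
          exact ⟨fun h => ha.2 (h ▸ he₁X), ha.1⟩
        · rw [Finset.mem_sdiff, hND, Finset.mem_filter]
          refine ⟨⟨Finset.mem_univ _, X.2.1 _ hb.1⟩, ?_⟩
          rw [Finset.mem_insert]
          rintro (h | h)
          · exact he₂X (h ▸ hb.1)
          · exact hb.2 h
      · intro X hX X' hX' hXX'
        obtain ⟨hf1, hf2, -, -⟩ := hfact X hX
        obtain ⟨hf1', hf2', -, -⟩ := hfact X' hX'
        apply Subtype.ext
        rw [sdiff_singleton_eq' hf1 hf2, sdiff_singleton_eq' hf1' hf2', hXX']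
    rw [Finset.card_product, Finset.card_erase_of_mem he₁G₁, G₁.2.2,
      Finset.card_sdiff_of_subset hsubND, Finset.card_insert_of_notMem he₂G₁, G₁.2.2, hNDcard] at hle
    exact hle
  have hcount : (bad.card : ℝ) + (n.choose 2 : ℝ) ≤ K := by
    have h := count_aux bad.card M (n.choose 2) hMpos hMC hbadcard
    rw [hKdef]
    push_cast [← Nat.cast_add]
    exact_mod_cast h
  -- Wasserstein bound
  have hWle : Wdist (exchangeGraph n M) (exchangeWalk n M G₁) (exchangeWalk n M G₂)
      ≤ (bad.card : ℝ) * (1 / K) := by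
    have hmemS : (∑ X, ∑ Y, A X Y * ((exchangeGraph n M).dist X Y : ℝ)) ∈
        {s | ∃ B : GraphM n M → GraphM n M → ℝ,
          IsCoupling (exchangeWalk n M G₁) (exchangeWalk n M G₂) B ∧
          s = ∑ x, ∑ y, B x y * ((exchangeGraph n M).dist x y : ℝ)} :=
      ⟨A, ⟨hAnn, hrow, hcol⟩, rfl⟩
    have hbdd : BddBelow {s | ∃ B : GraphM n M → GraphM n M → ℝ,
        IsCoupling (exchangeWalk n M G₁) (exchangeWalk n M G₂) B ∧
        s = ∑ x, ∑ y, B x y * ((exchangeGraph n M).dist x y : ℝ)} := by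
      refine ⟨0, ?_⟩
      rintro s ⟨B, ⟨hBnn, -, -⟩, rfl⟩
      apply Finset.sum_nonneg
      intro x _
      apply Finset.sum_nonneg
      intro y _
      exact mul_nonneg (hBnn x y) (Nat.cast_nonneg _)
    calc Wdist (exchangeGraph n M) (exchangeWalk n M G₁) (exchangeWalk n M G₂)
        ≤ ∑ X, ∑ Y, A X Y * ((exchangeGraph n M).dist X Y : ℝ) := csInf_le hbdd hmemS
      _ = ∑ X, exchangeWalk n M G₁ X * ((exchangeGraph n M).dist X (φ X) : ℝ) := by
          apply Finset.sum_congr rfl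
          intro X _
          have : ∀ Y, A X Y * ((exchangeGraph n M).dist X Y : ℝ) =
              if Y = φ X then exchangeWalk n M G₁ X * ((exchangeGraph n M).dist X Y : ℝ)
              else 0 := by
            intro Y
            rw [hA]
            dsimp only
            rw [ite_mul, zero_mul]
          rw [Finset.sum_congr rfl (fun Y _ => this Y),
            Finset.sum_ite_eq' Finset.univ (φ X)
              (fun Y => exchangeWalk n M G₁ X * ((exchangeGraph n M).dist X Y : ℝ))]
          exact if_pos (Finset.mem_univ _)
      _ ≤ ∑ X, if X ∈ bad then 1 / K else 0 := Finset.sum_le_sum (fun X _ => hterm X)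
      _ = (bad.card : ℝ) * (1 / K) := by
          rw [Finset.sum_ite_mem, Finset.univ_inter, Finset.sum_const, nsmul_eq_mul]
  -- final assembly
  have hdist1 : (exchangeGraph n M).dist G₁ G₂ = 1 := SimpleGraph.dist_eq_one_iff_adj.mpr hadj
  rw [ricci, hdist1, Nat.cast_one, div_one]
  have h3 : ((bad.card:ℝ) + (n.choose 2:ℝ))/K ≤ 1 := by
    rw [div_le_one hKpos]
    exact hcount
  rw [add_div] at h3
  have h4 : (bad.card : ℝ) * (1/K) = (bad.card : ℝ)/K := by ring
  linarith [hWle]
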